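/- (Zero-One Law) For every positive semidefinite d×d matrix ρ with tr(ρ) = 1, the reachable termination probability satisfies h(ρ) = 0 or h(ρ) = 1. -/

import Mathlib

noncomputable section
open Matrix
open scoped ComplexOrder

variable {d m r : ℕ}

/-- One step of process `i`: `T_i(ρ) = E_i(M₁ ρ M₁†) = ∑_j (E_{i,j} M₁) ρ (E_{i,j} M₁)†`. -/
def Tstep (E : Fin m → Fin r → Matrix (Fin d) (Fin d) ℂ)
    (M1 : Matrix (Fin d) (Fin d) ℂ) (i : Fin m)
    (ρ : Matrix (Fin d) (Fin d) ℂ) : Matrix (Fin d) (Fin d) ℂ :=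
  ∑ j, (E i j * M1) * ρ * (E i j * M1)ᴴ

/-- `T_f` for a word `f = s₁⋯s_n`: apply `T_{s₁}` first, then `T_{s₂}`, …, `T_{s_n}`. -/
def Tword (E : Fin m → Fin r → Matrix (Fin d) (Fin d) ℂ)
    (M1 : Matrix (Fin d) (Fin d) ℂ) (f : List (Fin m))
    (ρ : Matrix (Fin d) (Fin d) ℂ) : Matrix (Fin d) (Fin d) ℂ :=
  f.foldl (fun σ k => Tstep E M1 k σ) ρ

/-- The support of a matrix: its column space, as a subspace of `ℂ^d`. -/
def supp (A : Matrix (Fin d) (Fin d) ℂ) : Submodule ℂ (Fin d → ℂ) :=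
  LinearMap.range (Matrix.toLin' A)

/-- Length-`n` prefix of a schedule. -/
def prefixn (s : ℕ → Fin m) (n : ℕ) : List (Fin m) :=
  List.ofFn (fun i : Fin n => s i)

/-- Termination probability within a word `f`. -/
def tWord (E : Fin m → Fin r → Matrix (Fin d) (Fin d) ℂ)
    (M0 M1 : Matrix (Fin d) (Fin d) ℂ) (f : List (Fin m))
    (ρ : Matrix (Fin d) (Fin d) ℂ) : ℝ :=
  ∑ n ∈ Finset.range (f.length + 1),
    (M0 * Tword E M1 (f.take n) ρ * M0ᴴ).trace.re

/-- Termination probability along a schedule `s`. -/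
def tSched (E : Fin m → Fin r → Matrix (Fin d) (Fin d) ℂ)
    (M0 M1 : Matrix (Fin d) (Fin d) ℂ) (s : ℕ → Fin m)
    (ρ : Matrix (Fin d) (Fin d) ℂ) : ℝ :=
  ∑' n : ℕ, (M0 * Tword E M1 (prefixn s n) ρ * M0ᴴ).trace.re

/-- Termination probability `t(ρ)`: infimum over all schedules. -/
def tInf (E : Fin m → Fin r → Matrix (Fin d) (Fin d) ℂ)
    (M0 M1 : Matrix (Fin d) (Fin d) ℂ)
    (ρ : Matrix (Fin d) (Fin d) ℂ) : ℝ :=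
  ⨅ s : ℕ → Fin m, tSched E M0 M1 s ρ

/-- The reachable space `H_{R(ρ)}`. -/
def HR (E : Fin m → Fin r → Matrix (Fin d) (Fin d) ℂ)
    (M1 : Matrix (Fin d) (Fin d) ℂ)
    (ρ : Matrix (Fin d) (Fin d) ℂ) : Submodule ℂ (Fin d → ℂ) :=
  ⨆ f : List (Fin m), supp (Tword E M1 f ρ)

/-- The average super-operator `T = (1/m) ∑ T_i`. -/
def Tavg (E : Fin m → Fin r → Matrix (Fin d) (Fin d) ℂ)
    (M1 : Matrix (Fin d) (Fin d) ℂ)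
    (ρ : Matrix (Fin d) (Fin d) ℂ) : Matrix (Fin d) (Fin d) ℂ :=
  ((m : ℂ)⁻¹) • ∑ i : Fin m, Tstep E M1 i ρ

/-- `H_{R̄_n(ρ)} = ⋁_{k=0}^n supp(T^k(ρ))`. -/
def HRbar (E : Fin m → Fin r → Matrix (Fin d) (Fin d) ℂ)
    (M1 : Matrix (Fin d) (Fin d) ℂ)
    (ρ : Matrix (Fin d) (Fin d) ℂ) (n : ℕ) : Submodule ℂ (Fin d → ℂ) :=
  ⨆ k : Fin (n + 1), supp ((Tavg E M1)^[k] ρ)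

/-- Reachable termination probability `h(ρ)`. -/
def hProb (E : Fin m → Fin r → Matrix (Fin d) (Fin d) ℂ)
    (M0 M1 : Matrix (Fin d) (Fin d) ℂ)
    (ρ : Matrix (Fin d) (Fin d) ℂ) : ℝ :=
  sInf { x : ℝ | ∃ σ : Matrix (Fin d) (Fin d) ℂ,
    σ.PosSemidef ∧ σ.trace = 1 ∧ supp σ ≤ HR E M1 ρ ∧ x = tInf E M0 M1 σ }

/-- `PD_f`: pure states diverging within the word `f`. -/
def PDword (E : Fin m → Fin r → Matrix (Fin d) (Fin d) ℂ)
    (M0 M1 : Matrix (Fin d) (Fin d) ℂ) (f : List (Fin m)) : Set (Fin d → ℂ) :=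
  { x : Fin d → ℂ | tWord E M0 M1 f (Matrix.vecMulVec x (star x)) = 0 }

/-- `PD_n`: union of `PD_f` over words of length `n`. -/
def PDn (E : Fin m → Fin r → Matrix (Fin d) (Fin d) ℂ)
    (M0 M1 : Matrix (Fin d) (Fin d) ℂ) (n : ℕ) : Set (Fin d → ℂ) :=
  { x : Fin d → ℂ | ∃ f : List (Fin m), f.length = n ∧ x ∈ PDword E M0 M1 f }

/-- `PD`: the diverging pure states. -/
def PD (E : Fin m → Fin r → Matrix (Fin d) (Fin d) ℂ)
    (M0 M1 : Matrix (Fin d) (Fin d) ℂ) : Set (Fin d → ℂ) :=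
  { x : Fin d → ℂ | ∃ s : ℕ → Fin m, tSched E M0 M1 s (Matrix.vecMulVec x (star x)) = 0 }

lemma supp_eq (A : Matrix (Fin d) (Fin d) ℂ) : supp A = LinearMap.range A.mulVecLin := by
  rfl

lemma finrank_supp (A : Matrix (Fin d) (Fin d) ℂ) :
    Module.finrank ℂ (supp A) = A.rank := rfl

-- R2: range(Mᴴ M) = range Mᴴ
lemma supp_conjTranspose_mul_self (B : Matrix (Fin d) (Fin d) ℂ) :
    supp (Bᴴ * B) = supp Bᴴ := by
  apply Submodule.eq_of_le_of_finrank_le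
  · rw [supp_eq, supp_eq, Matrix.mulVecLin_mul]
    exact LinearMap.range_comp_le_range _ _
  · show (Bᴴ).rank ≤ (Bᴴ * B).rank
    rw [Matrix.rank_conjTranspose_mul_self, Matrix.rank_conjTranspose]

lemma herm_dot_mulVec (S : Matrix (Fin d) (Fin d) ℂ) (hS : S.IsHermitian)
    (x z : Fin d → ℂ) : star x ⬝ᵥ S.mulVec z = star (S.mulVec x) ⬝ᵥ z := by
  rw [Matrix.dotProduct_mulVec, Matrix.star_mulVec, hS.eq]

lemma range_ker_sup (S : Matrix (Fin d) (Fin d) ℂ) (hS : S.IsHermitian) :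
    LinearMap.range S.mulVecLin ⊔ LinearMap.ker S.mulVecLin = ⊤ := by
  have hdisj : LinearMap.range S.mulVecLin ⊓ LinearMap.ker S.mulVecLin = ⊥ := by
    rw [Submodule.eq_bot_iff]
    rintro x ⟨⟨z, rfl⟩, (hk : S.mulVecLin (S.mulVecLin z) = 0)⟩
    have h0 : star (S.mulVecLin z) ⬝ᵥ (S.mulVecLin z) = 0 := by
      show star (S.mulVecLin z) ⬝ᵥ S.mulVec z = 0
      rw [herm_dot_mulVec S hS]
      have : S.mulVec (S.mulVecLin z) = 0 := hk
      rw [this]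
      simp
    simpa using dotProduct_star_self_eq_zero.mp h0
  apply Submodule.eq_top_of_finrank_eq
  have h1 := Submodule.finrank_sup_add_finrank_inf_eq (LinearMap.range S.mulVecLin)
    (LinearMap.ker S.mulVecLin)
  have h2 := LinearMap.finrank_range_add_finrank_ker S.mulVecLin
  rw [hdisj] at h1
  simp only [finrank_bot, add_zero] at h1
  rw [h1, h2]

lemma psd_mulVec_eq_zero {P : Matrix (Fin d) (Fin d) ℂ} (hP : P.PosSemidef)
    {x : Fin d → ℂ} (h : star x ⬝ᵥ P.mulVec x = 0) : P.mulVec x = 0 :=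
  (hP.dotProduct_mulVec_zero_iff x).mp h

lemma supp_add_left {P Q : Matrix (Fin d) (Fin d) ℂ} (hP : P.PosSemidef)
    (hQ : Q.PosSemidef) : supp P ≤ supp (P + Q) := by
  set S := P + Q with hSdef
  have hSpsd : S.PosSemidef := hP.add hQ
  rintro y ⟨x, rfl⟩
  have htop := range_ker_sup S hSpsd.1
  have hy : (Matrix.toLin' P) x ∈ (⊤ : Submodule ℂ (Fin d → ℂ)) := trivial
  rw [← htop] at hy
  obtain ⟨a, ha, b, hb, hab⟩ := Submodule.mem_sup.mp hy
  -- b ∈ ker S, show b = 0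
  have hSb : S.mulVec b = 0 := hb
  have hPbQb : star b ⬝ᵥ P.mulVec b + star b ⬝ᵥ Q.mulVec b = 0 := by
    have : star b ⬝ᵥ S.mulVec b = 0 := by rw [hSb]; simp
    rw [hSdef, Matrix.add_mulVec, dotProduct_add] at this
    exact this
  have hPb : P.mulVec b = 0 := by
    apply psd_mulVec_eq_zero hP
    have h1 := hP.dotProduct_mulVec_nonneg b
    have h2 := hQ.dotProduct_mulVec_nonneg b
    have : star b ⬝ᵥ P.mulVec b = 0 ∧ star b ⬝ᵥ Q.mulVec b = 0 := by
      constructor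
      · exact le_antisymm (by rw [← hPbQb]; exact le_add_of_nonneg_right h2) h1 |>.symm ▸ rfl
      · exact le_antisymm (by rw [← hPbQb]; exact le_add_of_nonneg_left h1) h2 |>.symm ▸ rfl
    exact this.1
  have hb0 : b = 0 := by
    apply dotProduct_star_self_eq_zero.mp
    have h1 : star b ⬝ᵥ ((Matrix.toLin' P) x) = star b ⬝ᵥ b := by
      rw [← hab, dotProduct_add]
      have ha0 : star b ⬝ᵥ a = 0 := by
        obtain ⟨z, rfl⟩ := ha
        show star b ⬝ᵥ S.mulVec z = 0
        rw [herm_dot_mulVec S hSpsd.1, hSb]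
        simp
      rw [ha0, zero_add]
    have h2 : star b ⬝ᵥ ((Matrix.toLin' P) x) = 0 := by
      show star b ⬝ᵥ P.mulVec x = 0
      rw [herm_dot_mulVec P hP.1, hPb]
      simp
    rw [← h1, h2]
  rw [hb0, add_zero] at hab
  rw [← hab]
  exact ha



variable (E : Fin m → Fin r → Matrix (Fin d) (Fin d) ℂ) (M0 M1 : Matrix (Fin d) (Fin d) ℂ)

lemma psd_sum {ι : Type*} (s : Finset ι) (P : ι → Matrix (Fin d) (Fin d) ℂ)
    (h : ∀ i ∈ s, (P i).PosSemidef) : (∑ i ∈ s, P i).PosSemidef := by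
  classical
  induction s using Finset.induction_on with
  | empty => simpa using Matrix.PosSemidef.zero
  | @insert a s ha ih =>
    rw [Finset.sum_insert ha]
    exact (h a (Finset.mem_insert_self a s)).add
      (ih fun i hi => h i (Finset.mem_insert_of_mem hi))

lemma Tstep_posSemidef (i : Fin m) {σ : Matrix (Fin d) (Fin d) ℂ} (hσ : σ.PosSemidef) :
    (Tstep E M1 i σ).PosSemidef :=
  psd_sum _ _ fun j _ => hσ.mul_mul_conjTranspose_same _

lemma Tword_posSemidef (f : List (Fin m)) :
    ∀ {σ : Matrix (Fin d) (Fin d) ℂ}, σ.PosSemidef → (Tword E M1 f σ).PosSemidef := by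
  induction f with
  | nil => intro σ h; exact h
  | cons a f ih => intro σ h; exact ih (Tstep_posSemidef E M1 a h)

lemma Tword_append (f g : List (Fin m)) (σ : Matrix (Fin d) (Fin d) ℂ) :
    Tword E M1 (f ++ g) σ = Tword E M1 g (Tword E M1 f σ) :=
  List.foldl_append

lemma Tstep_smul (i : Fin m) (c : ℂ) (σ : Matrix (Fin d) (Fin d) ℂ) :
    Tstep E M1 i (c • σ) = c • Tstep E M1 i σ := by
  simp [Tstep, Finset.smul_sum, Matrix.mul_smul, Matrix.smul_mul]

lemma Tword_smul (f : List (Fin m)) (c : ℂ) :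
    ∀ σ : Matrix (Fin d) (Fin d) ℂ, Tword E M1 f (c • σ) = c • Tword E M1 f σ := by
  induction f with
  | nil => intro σ; rfl
  | cons a f ih =>
    intro σ
    show Tword E M1 f (Tstep E M1 a (c • σ)) = c • Tword E M1 f (Tstep E M1 a σ)
    rw [Tstep_smul, ih]

-- supp (A σ Aᴴ) ≤ map A (supp σ), no hypotheses
lemma supp_mul_le (A σ : Matrix (Fin d) (Fin d) ℂ) :
    supp (A * σ * Aᴴ) ≤ Submodule.map A.mulVecLin (supp σ) := by
  rw [supp_eq, supp_eq]
  rintro y ⟨x, rfl⟩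
  exact ⟨(σ * Aᴴ).mulVecLin x, ⟨Aᴴ.mulVecLin x, by simp [Matrix.mulVecLin_mul]⟩,
    by simp [Matrix.mulVecLin_mul, Matrix.mul_assoc]⟩

-- map A (supp σ) ≤ supp (A σ Aᴴ) for PSD σ
lemma map_supp_le (A : Matrix (Fin d) (Fin d) ℂ) {σ : Matrix (Fin d) (Fin d) ℂ}
    (hσ : σ.PosSemidef) : Submodule.map A.mulVecLin (supp σ) ≤ supp (A * σ * Aᴴ) := by
  obtain ⟨B, rfl⟩ : ∃ B : Matrix (Fin d) (Fin d) ℂ, σ = Bᴴ * B := by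
    open scoped MatrixOrder in exact CStarAlgebra.nonneg_iff_eq_star_mul_self.mp hσ.nonneg
  have h1 : A * (Bᴴ * B) * Aᴴ = (B * Aᴴ)ᴴ * (B * Aᴴ) := by
    simp [Matrix.conjTranspose_mul, Matrix.mul_assoc]
  rw [h1, supp_conjTranspose_mul_self (B * Aᴴ), supp_conjTranspose_mul_self B]
  rintro y ⟨x, hx, rfl⟩
  obtain ⟨z, rfl⟩ := hx
  refine ⟨z, ?_⟩
  show (B * Aᴴ)ᴴ.mulVec z = A.mulVecLin (Bᴴ.mulVec z)
  simp [Matrix.conjTranspose_mul, ← Matrix.mulVec_mulVec]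

lemma supp_summand_le {ι : Type*} (s : Finset ι) (P : ι → Matrix (Fin d) (Fin d) ℂ)
    (h : ∀ i ∈ s, (P i).PosSemidef) (j : ι) (hj : j ∈ s) :
    supp (P j) ≤ supp (∑ i ∈ s, P i) := by
  classical
  have : ∑ i ∈ s, P i = P j + ∑ i ∈ s.erase j, P i := by
    rw [← Finset.sum_erase_add s P hj, add_comm]
  rw [this]
  exact supp_add_left (h j hj) (psd_sum _ _ fun i hi => h i (Finset.mem_of_mem_erase hi))

lemma sum_mulVec' {ι : Type*} (s : Finset ι) (P : ι → Matrix (Fin d) (Fin d) ℂ)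
    (x : Fin d → ℂ) : (∑ i ∈ s, P i) *ᵥ x = ∑ i ∈ s, P i *ᵥ x := by
  classical
  induction s using Finset.induction_on with
  | empty => simp
  | @insert a s ha ih => simp [Finset.sum_insert ha, Matrix.add_mulVec, ih]

lemma supp_sum_le {ι : Type*} (s : Finset ι) (P : ι → Matrix (Fin d) (Fin d) ℂ)
    (U : Submodule ℂ (Fin d → ℂ)) (h : ∀ i ∈ s, supp (P i) ≤ U) :
    supp (∑ i ∈ s, P i) ≤ U := by
  classical
  rw [supp_eq]
  rintro y ⟨x, rfl⟩
  have : (∑ i ∈ s, P i).mulVecLin x = ∑ i ∈ s, (P i).mulVec x := by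
    exact sum_mulVec' s P x
  rw [this]
  exact Submodule.sum_mem U fun i hi => h i hi ⟨x, rfl⟩

lemma supp_smul_le (c : ℂ) (A : Matrix (Fin d) (Fin d) ℂ) : supp (c • A) ≤ supp A := by
  rw [supp_eq, supp_eq]
  rintro y ⟨x, rfl⟩
  exact ⟨c • x, by simp [Matrix.mulVec_smul, Matrix.smul_mulVec]⟩


lemma Tword_singleton (i : Fin m) (σ : Matrix (Fin d) (Fin d) ℂ) :
    Tword E M1 [i] σ = Tstep E M1 i σ := rfl

lemma HR_maps {ρ : Matrix (Fin d) (Fin d) ℂ} (hρ : ρ.PosSemidef) (i : Fin m) (j : Fin r) :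
    Submodule.map (E i j * M1).mulVecLin (HR E M1 ρ) ≤ HR E M1 ρ := by
  rw [HR, Submodule.map_iSup]
  apply iSup_le
  intro f
  calc Submodule.map (E i j * M1).mulVecLin (supp (Tword E M1 f ρ))
      ≤ supp ((E i j * M1) * Tword E M1 f ρ * (E i j * M1)ᴴ) :=
        map_supp_le _ (Tword_posSemidef E M1 f hρ)
    _ ≤ supp (Tstep E M1 i (Tword E M1 f ρ)) := by
        apply supp_summand_le Finset.univ
          (fun j' => (E i j' * M1) * Tword E M1 f ρ * (E i j' * M1)ᴴ)
          (fun j' _ => (Tword_posSemidef E M1 f hρ).mul_mul_conjTranspose_same _)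
          j (Finset.mem_univ j)
    _ = supp (Tword E M1 (f ++ [i]) ρ) := by
        rw [Tword_append, Tword_singleton]
    _ ≤ HR E M1 ρ := le_iSup (fun f => supp (Tword E M1 f ρ)) (f ++ [i])

lemma supp_Tstep_le_HR {ρ σ : Matrix (Fin d) (Fin d) ℂ} (hρ : ρ.PosSemidef)
    (hσ : σ.PosSemidef) (i : Fin m) (h : supp σ ≤ HR E M1 ρ) :
    supp (Tstep E M1 i σ) ≤ HR E M1 ρ := by
  apply supp_sum_le
  intro j _
  calc supp ((E i j * M1) * σ * (E i j * M1)ᴴ)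
      ≤ Submodule.map (E i j * M1).mulVecLin (supp σ) := supp_mul_le _ _
    _ ≤ Submodule.map (E i j * M1).mulVecLin (HR E M1 ρ) := Submodule.map_mono h
    _ ≤ HR E M1 ρ := HR_maps E M1 hρ i j

lemma supp_Tword_le_HR {ρ : Matrix (Fin d) (Fin d) ℂ} (hρ : ρ.PosSemidef)
    (f : List (Fin m)) : ∀ {σ : Matrix (Fin d) (Fin d) ℂ}, σ.PosSemidef →
    supp σ ≤ HR E M1 ρ → supp (Tword E M1 f σ) ≤ HR E M1 ρ := by
  induction f with
  | nil => intro σ _ h; exact h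
  | cons a f ih =>
    intro σ hσ h
    exact ih (Tstep_posSemidef E M1 a hσ) (supp_Tstep_le_HR E M1 hρ hσ a h)

lemma supp_self_le_HR (ρ : Matrix (Fin d) (Fin d) ℂ) : supp ρ ≤ HR E M1 ρ :=
  le_iSup (fun f => supp (Tword E M1 f ρ)) []




lemma trace_nonneg' {A : Matrix (Fin d) (Fin d) ℂ} (hA : A.PosSemidef) : 0 ≤ A.trace := by
  rw [Matrix.trace]
  apply Finset.sum_nonneg
  intro i _
  have := hA.dotProduct_mulVec_nonneg (Pi.single i 1)
  simpa [dotProduct, Matrix.mulVec, Pi.single_apply, Finset.sum_ite_eq, diag] using this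

lemma trace_eq_re {A : Matrix (Fin d) (Fin d) ℂ} (hA : A.PosSemidef) :
    A.trace = (A.trace.re : ℂ) := by
  have h := trace_nonneg' hA
  rw [Complex.nonneg_iff] at h
  exact (Complex.ext (by simp) (by simp [h.2])).symm

lemma trace_re_nonneg {A : Matrix (Fin d) (Fin d) ℂ} (hA : A.PosSemidef) : 0 ≤ A.trace.re :=
  ((Complex.nonneg_iff).mp (trace_nonneg' hA)).1

lemma term_nonneg {A : Matrix (Fin d) (Fin d) ℂ} (hA : A.PosSemidef) :
    0 ≤ (M0 * A * M0ᴴ).trace.re :=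
  trace_re_nonneg (hA.mul_mul_conjTranspose_same M0)

lemma trace_Tstep (hE : ∀ i, ∑ j, (E i j)ᴴ * E i j = 1)
    (hM : M0ᴴ * M0 + M1ᴴ * M1 = 1) (i : Fin m) (σ : Matrix (Fin d) (Fin d) ℂ) :
    (Tstep E M1 i σ).trace = σ.trace - (M0 * σ * M0ᴴ).trace := by
  have h1 : (Tstep E M1 i σ).trace
      = ∑ j, ((E i j * M1)ᴴ * (E i j * M1) * σ).trace := by
    rw [Tstep, Matrix.trace_sum]
    congr 1; ext j
    rw [Matrix.trace_mul_cycle]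
  have h2 : ∑ j, ((E i j * M1)ᴴ * (E i j * M1) * σ) 
      = (M1ᴴ * M1) * σ := by
    have : ∀ j : Fin r, (E i j * M1)ᴴ * (E i j * M1) * σ
        = M1ᴴ * ((E i j)ᴴ * E i j) * M1 * σ := by
      intro j
      simp [Matrix.conjTranspose_mul, Matrix.mul_assoc]
    rw [Finset.sum_congr rfl (fun j _ => this j)]
    have : ∑ j, M1ᴴ * ((E i j)ᴴ * E i j) * M1 * σ
        = M1ᴴ * (∑ j, (E i j)ᴴ * E i j) * M1 * σ := by
      rw [Finset.mul_sum, Finset.sum_mul, Finset.sum_mul]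
    rw [this, hE i]
    simp
  rw [h1, ← Matrix.trace_sum, h2]
  have hM1 : M1ᴴ * M1 = 1 - M0ᴴ * M0 := by
    rw [← hM]; abel
  rw [hM1, Matrix.sub_mul, Matrix.one_mul, Matrix.trace_sub]
  have := Matrix.trace_mul_cycle M0ᴴ M0 σ
  rw [this]
  have := Matrix.trace_mul_cycle σ M0ᴴ M0
  rw [this]

lemma prefixn_zero (s : ℕ → Fin m) : prefixn s 0 = [] := rfl

lemma prefixn_succ (s : ℕ → Fin m) (n : ℕ) :
    prefixn s (n + 1) = prefixn s n ++ [s n] := by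
  rw [prefixn, List.ofFn_succ']
  simp [prefixn, List.concat_eq_append]

lemma Tword_prefixn_succ (s : ℕ → Fin m) (n : ℕ) (σ : Matrix (Fin d) (Fin d) ℂ) :
    Tword E M1 (prefixn s (n + 1)) σ
      = Tstep E M1 (s n) (Tword E M1 (prefixn s n) σ) := by
  rw [prefixn_succ, Tword_append, Tword_singleton]

/-- the `n`-th term of the termination series -/
def gterm (E : Fin m → Fin r → Matrix (Fin d) (Fin d) ℂ)
    (M0 M1 : Matrix (Fin d) (Fin d) ℂ) (s : ℕ → Fin m)
    (σ : Matrix (Fin d) (Fin d) ℂ) (n : ℕ) : ℝ :=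
  (M0 * Tword E M1 (prefixn s n) σ * M0ᴴ).trace.re

lemma tSched_eq_tsum (s : ℕ → Fin m) (σ : Matrix (Fin d) (Fin d) ℂ) :
    tSched E M0 M1 s σ = ∑' n, gterm E M0 M1 s σ n := rfl

lemma gterm_nonneg (s : ℕ → Fin m) {σ : Matrix (Fin d) (Fin d) ℂ} (hσ : σ.PosSemidef)
    (n : ℕ) : 0 ≤ gterm E M0 M1 s σ n :=
  term_nonneg M0 (Tword_posSemidef E M1 _ hσ)

lemma partial_sum_eq (hE : ∀ i, ∑ j, (E i j)ᴴ * E i j = 1)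
    (hM : M0ᴴ * M0 + M1ᴴ * M1 = 1) (s : ℕ → Fin m) (σ : Matrix (Fin d) (Fin d) ℂ)
    (n : ℕ) :
    ∑ k ∈ Finset.range n, gterm E M0 M1 s σ k
      = σ.trace.re - (Tword E M1 (prefixn s n) σ).trace.re := by
  induction n with
  | zero => simp [prefixn_zero, Tword]
  | succ n ih =>
    rw [Finset.sum_range_succ, ih, Tword_prefixn_succ,
      trace_Tstep E M0 M1 hE hM]
    simp [Complex.sub_re, gterm]
    ring

lemma gterm_summable (hE : ∀ i, ∑ j, (E i j)ᴴ * E i j = 1)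
    (hM : M0ᴴ * M0 + M1ᴴ * M1 = 1) (s : ℕ → Fin m) {σ : Matrix (Fin d) (Fin d) ℂ}
    (hσ : σ.PosSemidef) : Summable (gterm E M0 M1 s σ) := by
  apply summable_of_sum_range_le (c := σ.trace.re) (gterm_nonneg E M0 M1 s hσ)
  intro n
  rw [partial_sum_eq E M0 M1 hE hM]
  have : 0 ≤ (Tword E M1 (prefixn s n) σ).trace.re :=
    trace_re_nonneg (Tword_posSemidef E M1 _ hσ)
  linarith

lemma tSched_nonneg (s : ℕ → Fin m) {σ : Matrix (Fin d) (Fin d) ℂ}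
    (hσ : σ.PosSemidef) : 0 ≤ tSched E M0 M1 s σ :=
  tsum_nonneg (gterm_nonneg E M0 M1 s hσ)

lemma tInf_nonneg {σ : Matrix (Fin d) (Fin d) ℂ} (hσ : σ.PosSemidef) :
    0 ≤ tInf E M0 M1 σ :=
  Real.iInf_nonneg fun s => tSched_nonneg E M0 M1 s hσ

lemma bddBelow_tSched {σ : Matrix (Fin d) (Fin d) ℂ} (hσ : σ.PosSemidef) :
    BddBelow (Set.range fun s => tSched E M0 M1 s σ) :=
  ⟨0, by rintro x ⟨s, rfl⟩; exact tSched_nonneg E M0 M1 s hσ⟩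

lemma tInf_le_tSched (s : ℕ → Fin m) {σ : Matrix (Fin d) (Fin d) ℂ}
    (hσ : σ.PosSemidef) : tInf E M0 M1 σ ≤ tSched E M0 M1 s σ :=
  ciInf_le (bddBelow_tSched E M0 M1 hσ) s

lemma Tword_prefixn_add (s : ℕ → Fin m) (σ : Matrix (Fin d) (Fin d) ℂ) (n : ℕ) :
    ∀ k, Tword E M1 (prefixn s (k + n)) σ
      = Tword E M1 (prefixn (fun j => s (n + j)) k) (Tword E M1 (prefixn s n) σ) := by
  intro k
  induction k with
  | zero => simp [prefixn_zero, Tword]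
  | succ k ih =>
    have h1 : k + 1 + n = (k + n) + 1 := by ring
    rw [h1, Tword_prefixn_succ, ih, Tword_prefixn_succ]
    congr 1
    ring_nf

lemma tSched_split (hE : ∀ i, ∑ j, (E i j)ᴴ * E i j = 1)
    (hM : M0ᴴ * M0 + M1ᴴ * M1 = 1) (s : ℕ → Fin m) {σ : Matrix (Fin d) (Fin d) ℂ}
    (hσ : σ.PosSemidef) (n : ℕ) :
    tSched E M0 M1 s σ
      = (∑ k ∈ Finset.range n, gterm E M0 M1 s σ k)
        + tSched E M0 M1 (fun j => s (n + j)) (Tword E M1 (prefixn s n) σ) := by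
  rw [tSched_eq_tsum, tSched_eq_tsum,
    ← Summable.sum_add_tsum_nat_add n (gterm_summable E M0 M1 hE hM s hσ)]
  congr 1
  apply tsum_congr
  intro k
  rw [gterm, gterm, Tword_prefixn_add]

lemma tSched_smul (s : ℕ → Fin m) (σ : Matrix (Fin d) (Fin d) ℂ) (c : ℝ) :
    tSched E M0 M1 s ((c : ℂ) • σ) = c * tSched E M0 M1 s σ := by
  rw [tSched_eq_tsum, tSched_eq_tsum, ← tsum_mul_left]
  apply tsum_congr
  intro n
  rw [gterm, gterm, Tword_smul]
  rw [Matrix.mul_smul, Matrix.smul_mul, Matrix.trace_smul]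
  simp [Complex.mul_re]

lemma psd_smul {A : Matrix (Fin d) (Fin d) ℂ} (hA : A.PosSemidef) {c : ℝ} (hc : 0 ≤ c) :
    ((c : ℂ) • A).PosSemidef := by
  constructor
  · show ((c : ℂ) • A)ᴴ = (c : ℂ) • A
    rw [Matrix.conjTranspose_smul, hA.1.eq]
    congr 1
    simp
  · exact (hA.smul (Complex.zero_le_real.mpr hc)).2



/-- Zero-One Law: `h(ρ) = 0` or `h(ρ) = 1`. -/
theorem zero_one_law (d m r : ℕ) (hd : 0 < d) (hm : 0 < m)
    (E : Fin m → Fin r → Matrix (Fin d) (Fin d) ℂ)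
    (hE : ∀ i, ∑ j, (E i j)ᴴ * E i j = 1)
    (M0 M1 : Matrix (Fin d) (Fin d) ℂ)
    (hM : M0ᴴ * M0 + M1ᴴ * M1 = 1)
    (ρ : Matrix (Fin d) (Fin d) ℂ) (hρ : ρ.PosSemidef) (htr : ρ.trace = 1) :
    hProb E M0 M1 ρ = 0 ∨ hProb E M0 M1 ρ = 1 := by
  classical
  have hmne : Nonempty (Fin m) := Fin.pos_iff_nonempty.mp hm
  have hmne2 : Nonempty (ℕ → Fin m) := ⟨fun _ => Classical.arbitrary _⟩
  set S := { x : ℝ | ∃ σ : Matrix (Fin d) (Fin d) ℂ,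
    σ.PosSemidef ∧ σ.trace = 1 ∧ supp σ ≤ HR E M1 ρ ∧ x = tInf E M0 M1 σ } with hSdef
  have hPdef : hProb E M0 M1 ρ = sInf S := rfl
  have hSne : S.Nonempty := ⟨tInf E M0 M1 ρ, ρ, hρ, htr, supp_self_le_HR E M1 ρ, rfl⟩
  have hSbdd : BddBelow S := by
    refine ⟨0, ?_⟩
    rintro x ⟨σ, hσ, _, _, rfl⟩
    exact tInf_nonneg E M0 M1 hσ
  have h0le : 0 ≤ hProb E M0 M1 ρ := by
    rw [hPdef]
    apply le_csInf hSne
    rintro x ⟨σ, hσ, _, _, rfl⟩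
    exact tInf_nonneg E M0 M1 hσ
  rcases eq_or_lt_of_le h0le with h0 | hpos
  · exact Or.inl h0.symm
  · right
    have key : ∀ x ∈ S, x = 1 := by
      rintro x ⟨σ, hσ, hσtr, hσsupp, rfl⟩
      have htrre : σ.trace.re = 1 := by rw [hσtr]; simp
      have hall : ∀ s : ℕ → Fin m, tSched E M0 M1 s σ = 1 := by
        intro s
        have hsum := gterm_summable E M0 M1 hE hM s hσ
        set t := tSched E M0 M1 s σ with ht
        set p : ℕ → ℝ := fun n => ∑ k ∈ Finset.range n, gterm E M0 M1 s σ k with hp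
        have hpn : ∀ n, p n = 1 - (Tword E M1 (prefixn s n) σ).trace.re := by
          intro n
          show (∑ k ∈ Finset.range n, gterm E M0 M1 s σ k) = _
          rw [partial_sum_eq E M0 M1 hE hM, htrre]
        have hle1 : t ≤ 1 := by
          rw [ht, tSched_eq_tsum]
          apply Real.tsum_le_of_sum_range_le (gterm_nonneg E M0 M1 s hσ)
          intro n
          have h1 := hpn n
          have h2 : 0 ≤ (Tword E M1 (prefixn s n) σ).trace.re :=
            trace_re_nonneg (Tword_posSemidef E M1 _ hσ)
          have h3 : p n = ∑ k ∈ Finset.range n, gterm E M0 M1 s σ k := rfl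
          linarith
        have hbound : ∀ n, p n + hProb E M0 M1 ρ * (1 - p n) ≤ t := by
          intro n
          set σn := Tword E M1 (prefixn s n) σ with hσn
          have hσnpsd : σn.PosSemidef := Tword_posSemidef E M1 _ hσ
          have hσnsupp : supp σn ≤ HR E M1 ρ := supp_Tword_le_HR E M1 hρ _ hσ hσsupp
          set cn := σn.trace.re with hcn
          have hcn0 : 0 ≤ cn := trace_re_nonneg hσnpsd
          have h1pn : 1 - p n = cn := by rw [hpn n]; ring
          have hX : hProb E M0 M1 ρ * cn ≤ tSched E M0 M1 (fun j => s (n + j)) σn := by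
            rcases eq_or_lt_of_le hcn0 with hc0 | hcpos
            · rw [← hc0, mul_zero]
              exact tSched_nonneg E M0 M1 _ hσnpsd
            · set σ' := ((cn⁻¹ : ℝ) : ℂ) • σn with hσ'
              have hσ'psd : σ'.PosSemidef := psd_smul hσnpsd (by positivity)
              have hσ'tr : σ'.trace = 1 := by
                rw [hσ', Matrix.trace_smul, trace_eq_re hσnpsd, ← hcn]
                rw [smul_eq_mul, ← Complex.ofReal_mul, inv_mul_cancel₀ (ne_of_gt hcpos)]
                simp
              have hσ'supp : supp σ' ≤ HR E M1 ρ :=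
                le_trans (supp_smul_le _ _) hσnsupp
              have hmem : tInf E M0 M1 σ' ∈ S := ⟨σ', hσ'psd, hσ'tr, hσ'supp, rfl⟩
              have h1 : hProb E M0 M1 ρ ≤ tInf E M0 M1 σ' := by
                rw [hPdef]
                exact csInf_le hSbdd hmem
              have h2 : tInf E M0 M1 σ' ≤ tSched E M0 M1 (fun j => s (n + j)) σ' :=
                tInf_le_tSched E M0 M1 _ hσ'psd
              have h3 : tSched E M0 M1 (fun j => s (n + j)) σ'
                  = cn⁻¹ * tSched E M0 M1 (fun j => s (n + j)) σn := by
                rw [hσ', tSched_smul]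
              have h4 : hProb E M0 M1 ρ ≤ cn⁻¹ * tSched E M0 M1 (fun j => s (n + j)) σn := by
                rw [← h3]; exact le_trans h1 h2
              calc hProb E M0 M1 ρ * cn ≤ (cn⁻¹ * tSched E M0 M1 (fun j => s (n + j)) σn) * cn :=
                    mul_le_mul_of_nonneg_right h4 hcn0
                _ = tSched E M0 M1 (fun j => s (n + j)) σn := by
                    field_simp
          have hsplit : t = p n + tSched E M0 M1 (fun j => s (n + j)) σn :=
            tSched_split E M0 M1 hE hM s hσ n
          rw [h1pn, hsplit]
          exact add_le_add_right hX _
        have htend : Filter.Tendsto p Filter.atTop (nhds t) :=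
          hsum.hasSum.tendsto_sum_nat
        have htend2 : Filter.Tendsto (fun n => p n + hProb E M0 M1 ρ * (1 - p n)) Filter.atTop
            (nhds (t + hProb E M0 M1 ρ * (1 - t))) := by
          apply Filter.Tendsto.add htend
          apply Filter.Tendsto.const_mul
          exact Filter.Tendsto.const_sub _ htend
        have hfin : t + hProb E M0 M1 ρ * (1 - t) ≤ t :=
          le_of_tendsto htend2 (Filter.Eventually.of_forall hbound)
        have : hProb E M0 M1 ρ * (1 - t) ≤ 0 := by linarith
        have h1t : 1 - t ≤ 0 := by
          by_contra hcon
          push_neg at hcon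
          nlinarith
        linarith
      have : tInf E M0 M1 σ = ⨅ _ : ℕ → Fin m, (1 : ℝ) := by
        rw [tInf]
        congr 1
        ext s
        exact hall s
      rw [this, ciInf_const]
    obtain ⟨x, hx⟩ := hSne
    have hx1 := key x hx
    rw [hPdef]
    apply le_antisymm
    · apply csInf_le hSbdd
      rw [← hx1]; exact hx
    · exact le_csInf ⟨x, hx⟩ fun y hy => (key y hy).ge
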